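/- Let p and q be positive integers with p > q, and let f be a polynomial in the pq entries of a q×p complex matrix. If the evaluation of f is nonzero at every surjective matrix A (i.e., at every q×p complex matrix of rank q), then f is a (nonzero) constant polynomial. Equivalently, every nonconstant polynomial on the space of q×p complex matrices with p > q has a zero at some surjective matrix. -/

import Mathlib

open MvPolynomial

/-- Over a domain, `degreeOf` is additive on products of nonzero polynomials. -/
lemma aux_degreeOf_mul {σ : Type*} [Fintype σ] {R : Type*} [CommRing R] [IsDomain R]
    (v : σ) {a b : MvPolynomial σ R} (ha : a ≠ 0) (hb : b ≠ 0) :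
    MvPolynomial.degreeOf v (a * b) =
      MvPolynomial.degreeOf v a + MvPolynomial.degreeOf v b := by
  classical
  obtain ⟨n, hn⟩ : ∃ n, Fintype.card σ = n + 1 := by
    have : Nonempty σ := ⟨v⟩
    exact ⟨Fintype.card σ - 1, by have := Fintype.card_pos (α := σ); omega⟩
  let e0 : σ ≃ Fin (n + 1) := (Fintype.equivFin σ).trans (finCongr hn)
  let e : σ ≃ Fin (n + 1) := e0.trans (Equiv.swap (e0 v) 0)
  have hev : e v = 0 := by simp [e]
  have key : ∀ c : MvPolynomial σ R,
      MvPolynomial.degreeOf v c = ((finSuccEquiv R n) (rename e c)).natDegree := by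
    intro c
    rw [natDegree_finSuccEquiv, ← hev, degreeOf_rename_of_injective e.injective]
  have hra : rename e a ≠ 0 := fun h => ha (rename_injective e e.injective (by simpa using h))
  have hrb : rename e b ≠ 0 := fun h => hb (rename_injective e e.injective (by simpa using h))
  have hfa : (finSuccEquiv R n) (rename e a) ≠ 0 := by
    simpa using (map_ne_zero_iff _ (finSuccEquiv R n).injective).mpr hra
  have hfb : (finSuccEquiv R n) (rename e b) ≠ 0 := by
    simpa using (map_ne_zero_iff _ (finSuccEquiv R n).injective).mpr hrb
  rw [key, key, key, map_mul, map_mul, Polynomial.natDegree_mul hfa hfb]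

/-- A polynomial with all `degreeOf` zero is a constant. -/
lemma aux_eq_C {σ : Type*} {R : Type*} [CommSemiring R] {f : MvPolynomial σ R}
    (h : ∀ v, MvPolynomial.degreeOf v f = 0) : f = MvPolynomial.C (MvPolynomial.coeff 0 f) := by
  classical
  ext m
  by_cases hm : m = 0
  · subst hm; simp
  · rw [coeff_C, if_neg (Ne.symm hm)]
    by_contra hc
    obtain ⟨v, hv⟩ : ∃ v, m v ≠ 0 := by
      by_contra hvv
      push_neg at hvv
      exact hm (Finsupp.ext hvv)
    have := monomial_le_degreeOf v (f := f) (m := m) (by simpa [mem_support_iff] using hc)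
    rw [h v] at this
    omega

lemma aux_deg0 {σ : Type*} {R : Type*} [CommSemiring R] {f : MvPolynomial σ R} {v : σ}
    (h : v ∉ f.vars) : MvPolynomial.degreeOf v f = 0 := by
  classical
  rw [degreeOf_eq_sup]
  refine Nat.le_zero.mp (Finset.sup_le fun m hm => ?_)
  by_contra hc
  exact h ((mem_vars v).mpr ⟨m, hm, Finsupp.mem_support_iff.mpr (by omega)⟩)

/-- If some q×q column-submatrix has nonzero determinant then A is surjective. -/
lemma aux_surj {q p : ℕ} (A : Matrix (Fin q) (Fin p) ℂ) (e : Fin q → Fin p)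
    (hdet : (A.submatrix id e).det ≠ 0) : Function.Surjective A.mulVecLin := by
  classical
  set B := A.submatrix id e with hBdef
  have hB : IsUnit B.det := isUnit_iff_ne_zero.mpr hdet
  let P : Matrix (Fin p) (Fin q) ℂ := Matrix.of fun c k => if c = e k then 1 else 0
  have hAP : A * P = B := by
    ext i k
    simp [Matrix.mul_apply, P, hBdef, Matrix.submatrix_apply]
  intro y
  refine ⟨(P * B⁻¹).mulVec y, ?_⟩
  rw [Matrix.mulVecLin_apply, Matrix.mulVec_mulVec, ← Matrix.mul_assoc, hAP,
    Matrix.mul_nonsing_inv _ hB, Matrix.one_mulVec]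

theorem stmt14 (p q : ℕ) (hq : 0 < q) (hpq : q < p)
    (f : MvPolynomial (Fin q × Fin p) ℂ)
    (hf : ∀ A : Matrix (Fin q) (Fin p) ℂ, Function.Surjective A.mulVecLin →
      MvPolynomial.eval (fun ij => A ij.1 ij.2) f ≠ 0) :
    ∃ c : ℂ, c ≠ 0 ∧ f = MvPolynomial.C c := by
  classical
  obtain ⟨m, rfl⟩ : ∃ m, p = m + 1 := ⟨p - 1, by omega⟩
  have hqm : q ≤ m := by omega
  -- the generic q×q determinant
  set D0 : MvPolynomial (Fin q × Fin q) ℂ :=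
    (Matrix.of fun i k => (X (i, k) : MvPolynomial (Fin q × Fin q) ℂ)).det with hD0
  have hevalD0 : ∀ y : Fin q × Fin q → ℂ,
      eval y D0 = (Matrix.of fun i k => y (i, k)).det := by
    intro y
    rw [hD0, RingHom.map_det]
    congr 1
    ext i k
    simp
  -- f is nonzero : evaluate at a surjective matrix
  set A0 : Matrix (Fin q) (Fin (m + 1)) ℂ :=
    Matrix.of fun i j => if (j : ℕ) = (i : ℕ) then 1 else 0 with hA0
  have hA0surj : Function.Surjective A0.mulVecLin := by
    have hle : q ≤ m + 1 := by omega
    apply aux_surj A0 (fun k => Fin.castLE hle k)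
    have h1 : A0.submatrix id (fun k => Fin.castLE hle k) = 1 := by
      ext i k
      simp only [Matrix.submatrix_apply, id_eq, hA0, Matrix.of_apply, Fin.coe_castLE,
        Matrix.one_apply]
      by_cases h : (k : ℕ) = (i : ℕ)
      · rw [if_pos h, if_pos (Fin.ext h.symm)]
      · rw [if_neg h, if_neg (fun hh => h (by rw [hh]))]
    rw [h1, Matrix.det_one]
    exact one_ne_zero
  have hf0 : f ≠ 0 := by
    intro h
    exact hf A0 hA0surj (by rw [h, map_zero])
  by_cases hu : IsUnit f
  · obtain ⟨g, hg⟩ := isUnit_iff_exists_inv.mp hu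
    have hg0 : g ≠ 0 := by
      intro h; rw [h, mul_zero] at hg; exact one_ne_zero hg.symm
    have hdeg : ∀ v, degreeOf v f = 0 := by
      intro v
      have := aux_degreeOf_mul v hf0 hg0
      rw [hg] at this
      have h1 : degreeOf v (1 : MvPolynomial (Fin q × Fin (m+1)) ℂ) = 0 := by
        simpa using aux_deg0 (f := (1 : MvPolynomial (Fin q × Fin (m+1)) ℂ)) (v := v)
          (by simp [vars_one])
      omega
    refine ⟨coeff 0 f, ?_, aux_eq_C hdeg⟩
    intro h
    exact hf0 (by rw [aux_eq_C hdeg, h, map_zero])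
  · exfalso
    obtain ⟨π, hirr, hdvd⟩ := WfDvdMonoid.exists_irreducible_factor hu hf0
    have hprime : Prime π := (UniqueFactorizationMonoid.irreducible_iff_prime).mp hirr
    -- for each column j, π divides the minor avoiding column j
    have hπdeg : ∀ v : Fin q × Fin (m + 1), degreeOf v π = 0 := by
      rintro ⟨i, j⟩
      set eC : Fin q → Fin (m + 1) := fun k => j.succAbove (Fin.castLE hqm k) with heC
      have heCinj : Function.Injective eC := fun a b hab =>
        Fin.castLE_injective hqm (Fin.succAbove_right_injective hab)
      have heCne : ∀ k, eC k ≠ j := fun k => Fin.succAbove_ne j _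
      set ι : Fin q × Fin q → Fin q × Fin (m + 1) := fun w => (w.1, eC w.2) with hι
      set Dj : MvPolynomial (Fin q × Fin (m + 1)) ℂ := rename ι D0 with hDj
      -- eval of Dj
      have hevalDj : ∀ x : Fin q × Fin (m + 1) → ℂ,
          eval x Dj = ((Matrix.of fun i' j' => x (i', j')).submatrix id eC).det := by
        intro x
        rw [hDj, eval_rename, hevalD0]
        congr 1
      -- Dj vanishes wherever f vanishes
      have hDj_rad : Dj ∈ (Ideal.span {f}).radical := by
        rw [← vanishingIdeal_zeroLocus_eq_radical (K := ℂ)]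
        rw [mem_vanishingIdeal_iff]
        intro x hx
        have hfx : eval x f = 0 := hx f (Ideal.subset_span rfl)
        show eval x Dj = 0
        rw [hevalDj]
        by_contra hdet
        exact hf (Matrix.of fun i' j' => x (i', j'))
          (aux_surj _ _ hdet) (by simpa using hfx)
      obtain ⟨n, hn⟩ := hDj_rad
      have hfdvd : f ∣ Dj ^ n := Ideal.mem_span_singleton.mp hn
      have hπDj : π ∣ Dj := hprime.dvd_of_dvd_pow (dvd_trans hdvd hfdvd)
      -- Dj is nonzero
      have hDj0 : Dj ≠ 0 := by
        intro h
        have := hevalDj (fun v => if v.2 = eC v.1 then 1 else 0)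
        rw [h, map_zero] at this
        have h1 : ((Matrix.of fun (i' : Fin q) (j' : Fin (m+1)) =>
            (if j' = eC i' then (1:ℂ) else 0)).submatrix id eC) = 1 := by
          ext a b
          simp only [Matrix.submatrix_apply, id_eq, Matrix.of_apply, Matrix.one_apply]
          by_cases hab : a = b
          · subst hab; simp
          · rw [if_neg (fun hh => hab (heCinj hh).symm), if_neg hab]
        rw [h1, Matrix.det_one] at this
        exact one_ne_zero this.symm
      -- the variable (i, j) does not occur in Dj
      have hvars : ((i, j) : Fin q × Fin (m + 1)) ∉ Dj.vars := by
        intro hmem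
        obtain ⟨w, hw, hweq⟩ := mem_vars_rename ι D0 hmem
        exact heCne w.2 (congrArg Prod.snd hweq)
      -- conclude
      obtain ⟨g, hg⟩ := hπDj
      have hπ0 : π ≠ 0 := hprime.ne_zero
      have hg0 : g ≠ 0 := by
        intro h; rw [h, mul_zero] at hg; exact hDj0 hg
      have := aux_degreeOf_mul ((i, j) : Fin q × Fin (m + 1)) hπ0 hg0
      rw [← hg] at this
      have hz := aux_deg0 hvars
      omega
    -- π is a nonzero constant, contradicting irreducibility
    have hπC : π = C (coeff 0 π) := aux_eq_C hπdeg
    have hc0 : coeff 0 π ≠ 0 := by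
      intro h
      exact hprime.ne_zero (by rw [hπC, h, map_zero])
    exact hirr.not_isUnit (hπC ▸ (isUnit_iff_ne_zero.mpr hc0).map (C : ℂ →+* _))
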